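/- Let k ≥ 1 be an integer. The orbits of the right action of the principal congruence subgroup Γ_k on P^1(E) are precisely the following pairwise disjoint sets, which partition P^1(E): (a) the set {∞} ∪ {[1 : t] : t ∈ E^×, v(t) ≤ −k}; (b) the set {[1 : t] : t = 0 or v(t) ≥ k}; (c) for each integer i with −k < i < k and each coset s·(1 + π^{min(k−i, k+i)} O_E) of O_E^×/(1 + π^{min(k−i, k+i)} O_E), the set {[1 : π^i s u] : u ∈ 1 + π^{min(k−i, k+i)} O_E}. Consequently, the set of Γ_k-orbits on P^1(E) is in bijection with {∞} ∪ {0} ∪ ⨆_{i = −k+1}^{k−1} O_E^×/(1 + π^{min(k+i, k−i)} O_E). -/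

import Mathlib

noncomputable section

open Matrix

/-- A surjective discrete (rank-one) valuation on a field `E`, written additively.
This is the algebraic structure of a nonarchimedean local field used in the statements. -/
structure DiscreteVal (E : Type) [Field E] : Type where
  v : E → ℤ
  v_mul : ∀ x y : E, x ≠ 0 → y ≠ 0 → v (x * y) = v x + v y
  v_min_le_add : ∀ x y : E, x ≠ 0 → y ≠ 0 → x + y ≠ 0 → min (v x) (v y) ≤ v (x + y)
  surj : ∀ n : ℤ, ∃ x : E, x ≠ 0 ∧ v x = n

namespace DiscreteVal

variable {E : Type} [Field E]

/-- The valuation ring `O_E = {x : x = 0 or v x ≥ 0}`. -/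
def O (ν : DiscreteVal E) : Set E := {x : E | x = 0 ∨ 0 ≤ ν.v x}

/-- `π` is a uniformizer: `π ≠ 0` and `v π = 1`. -/
def IsUniformizer (ν : DiscreteVal E) (π : E) : Prop := π ≠ 0 ∧ ν.v π = 1

/-- The set `π^m · O_E` for `m : ℤ`. -/
def ball (ν : DiscreteVal E) (π : E) (m : ℤ) : Set E :=
  {y : E | ∃ z ∈ ν.O, y = π ^ m * z}

end DiscreteVal
namespace DiscreteVal
variable {E : Type} [Field E] (ν : DiscreteVal E) {π : E}

theorem v_one : ν.v 1 = 0 := by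
  have := ν.v_mul 1 1 one_ne_zero one_ne_zero
  simpa using this.symm

theorem v_inv {x : E} (hx : x ≠ 0) : ν.v x⁻¹ = - ν.v x := by
  have := ν.v_mul x x⁻¹ hx (inv_ne_zero hx)
  rw [mul_inv_cancel₀ hx, v_one] at this
  omega

theorem v_neg {x : E} (hx : x ≠ 0) : ν.v (-x) = ν.v x := by
  have h1 : ν.v (-1 : E) = 0 := by
    have := ν.v_mul (-1) (-1) (by norm_num) (by norm_num)
    simp only [neg_mul, one_mul, neg_neg, v_one] at this; omega
  have := ν.v_mul (-1) x (by norm_num) hx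
  rw [neg_one_mul] at this; omega

theorem v_zpow (hπ : ν.IsUniformizer π) (n : ℤ) : ν.v (π ^ n) = n := by
  have h0 : ∀ m : ℕ, ν.v (π ^ (m:ℤ)) = m := by
    intro m
    induction m with
    | zero => simpa using ν.v_one
    | succ p ih =>
      have : ((p:ℤ)+1) = (p+1 : ℕ) := by push_cast; ring
      rw [show ((p+1:ℕ):ℤ) = (p:ℤ) + 1 by push_cast; ring, zpow_add₀ hπ.1,
        ν.v_mul _ _ (zpow_ne_zero _ hπ.1) (zpow_ne_zero _ hπ.1), ih]
      simp [hπ.2]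
  rcases le_or_gt 0 n with h | h
  · obtain ⟨m, rfl⟩ := Int.eq_ofNat_of_zero_le h; exact h0 m
  · obtain ⟨m, rfl⟩ := Int.eq_negSucc_of_lt_zero h
    have h1 : (Int.negSucc m : ℤ) = -((m+1:ℕ):ℤ) := by simp [Int.negSucc_eq]
    rw [h1, _root_.zpow_neg, ν.v_inv (zpow_ne_zero _ hπ.1), h0]

theorem mem_ball_iff (hπ : ν.IsUniformizer π) {m : ℤ} {y : E} :
    y ∈ ν.ball π m ↔ y = 0 ∨ m ≤ ν.v y := by
  constructor
  · rintro ⟨z, hz, rfl⟩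
    rcases hz with rfl | hz
    · left; simp
    · rcases eq_or_ne z 0 with rfl | hz0
      · left; simp
      · right
        rw [ν.v_mul _ _ (zpow_ne_zero _ hπ.1) hz0, ν.v_zpow hπ]
        omega
  · rintro (rfl | h)
    · exact ⟨0, Or.inl rfl, by simp⟩
    · rcases eq_or_ne y 0 with rfl | hy
      · exact ⟨0, Or.inl rfl, by simp⟩
      · refine ⟨π ^ (-m) * y, Or.inr ?_, ?_⟩
        · rw [ν.v_mul _ _ (zpow_ne_zero _ hπ.1) hy, ν.v_zpow hπ]; omega
        · rw [← mul_assoc, ← zpow_add₀ hπ.1]; simp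

theorem zero_mem_ball (m : ℤ) : (0 : E) ∈ ν.ball π m := ⟨0, Or.inl rfl, by simp⟩

theorem ball_anti (hπ : ν.IsUniformizer π) {m m' : ℤ} (h : m ≤ m') :
    ν.ball π m' ⊆ ν.ball π m := by
  intro y hy
  rw [ν.mem_ball_iff hπ] at hy ⊢
  rcases hy with rfl | hy
  · exact Or.inl rfl
  · exact Or.inr (le_trans h hy)

theorem ball_add (hπ : ν.IsUniformizer π) {m : ℤ} {a b : E}
    (ha : a ∈ ν.ball π m) (hb : b ∈ ν.ball π m) : a + b ∈ ν.ball π m := by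
  rcases eq_or_ne a 0 with rfl | ha0
  · simpa using hb
  rcases eq_or_ne b 0 with rfl | hb0
  · simpa using ha
  rw [ν.mem_ball_iff hπ] at ha hb ⊢
  replace ha := ha.resolve_left ha0
  replace hb := hb.resolve_left hb0
  rcases eq_or_ne (a + b) 0 with h | h
  · exact Or.inl h
  · exact Or.inr (le_trans (le_min ha hb) (ν.v_min_le_add a b ha0 hb0 h))

theorem ball_neg (hπ : ν.IsUniformizer π) {m : ℤ} {a : E}
    (ha : a ∈ ν.ball π m) : -a ∈ ν.ball π m := by
  rcases eq_or_ne a 0 with rfl | ha0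
  · simpa using ha
  rw [ν.mem_ball_iff hπ] at ha ⊢
  rw [ν.v_neg ha0]
  rcases ha with rfl | ha
  · simp
  · exact Or.inr ha

theorem ball_sub (hπ : ν.IsUniformizer π) {m : ℤ} {a b : E}
    (ha : a ∈ ν.ball π m) (hb : b ∈ ν.ball π m) : a - b ∈ ν.ball π m := by
  rw [sub_eq_add_neg]
  exact ν.ball_add hπ ha (ν.ball_neg hπ hb)

theorem ball_mul (hπ : ν.IsUniformizer π) {m n : ℤ} {a b : E}
    (ha : a ∈ ν.ball π m) (hb : b ∈ ν.ball π n) : a * b ∈ ν.ball π (m + n) := by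
  rcases eq_or_ne a 0 with rfl | ha0
  · simpa using ν.zero_mem_ball (m + n)
  rcases eq_or_ne b 0 with rfl | hb0
  · simpa using ν.zero_mem_ball (m + n)
  rw [ν.mem_ball_iff hπ] at ha hb ⊢
  replace ha := ha.resolve_left ha0
  replace hb := hb.resolve_left hb0
  right
  rw [ν.v_mul _ _ ha0 hb0]
  omega

theorem mem_ball_of_v (hπ : ν.IsUniformizer π) {m : ℤ} {a : E} (h : m ≤ ν.v a) :
    a ∈ ν.ball π m := (ν.mem_ball_iff hπ).2 (Or.inr h)

theorem inv_mem_ball (hπ : ν.IsUniformizer π) {c : E} (hc : c ≠ 0) :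
    c⁻¹ ∈ ν.ball π (-ν.v c) :=
  ν.mem_ball_of_v hπ (le_of_eq (ν.v_inv hc).symm)

theorem div_mem_ball (hπ : ν.IsUniformizer π) {m : ℤ} {a c : E}
    (ha : a ∈ ν.ball π (m + ν.v c)) (hc : c ≠ 0) : a / c ∈ ν.ball π m := by
  have := ν.ball_mul hπ ha (ν.inv_mem_ball hπ hc)
  rw [div_eq_mul_inv]
  simpa using this

theorem div_unit_mem_ball (hπ : ν.IsUniformizer π) {m : ℤ} {a c : E}
    (ha : a ∈ ν.ball π m) (hc : c ≠ 0) (hvc : ν.v c = 0) : a / c ∈ ν.ball π m :=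
  ν.div_mem_ball hπ (by rwa [hvc, add_zero]) hc

theorem one_add_unit (hπ : ν.IsUniformizer π) {m : ℤ} {z : E}
    (hz : z ∈ ν.ball π m) (hm : 1 ≤ m) : 1 + z ≠ 0 ∧ ν.v (1 + z) = 0 := by
  rcases eq_or_ne z 0 with rfl | hz0
  · simpa using ν.v_one
  rw [ν.mem_ball_iff hπ] at hz
  replace hz := hz.resolve_left hz0
  have hvz : 1 ≤ ν.v z := le_trans hm hz
  have hne : 1 + z ≠ 0 := by
    intro h
    have : z = -1 := by linear_combination h
    rw [this, ν.v_neg one_ne_zero, ν.v_one] at hvz; omega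
  refine ⟨hne, ?_⟩
  have h1 : 0 ≤ ν.v (1 + z) := by
    have := ν.v_min_le_add 1 z one_ne_zero hz0 hne
    rw [ν.v_one] at this
    omega
  have h3 := ν.v_min_le_add (1 + z) (-z) hne (neg_ne_zero.2 hz0) (by simp)
  rw [ν.v_neg hz0] at h3
  have h4 : (1 + z) + -z = 1 := by ring
  rw [h4, ν.v_one] at h3
  omega

end DiscreteVal


section ProjLine

variable {E : Type} [Field E]

/-- The point `[a : b]` of the projective line over `E`. -/
def projPt (a b : E) (h : a ≠ 0 ∨ b ≠ 0) : Projectivization E (Fin 2 → E) :=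
  Projectivization.mk E ![a, b] (by
    intro hc
    rcases h with h | h
    · exact h (by simpa using congrFun hc 0)
    · exact h (by simpa using congrFun hc 1))

/-- The point `∞ = [0 : 1]`. -/
def inftyPt (E : Type) [Field E] : Projectivization E (Fin 2 → E) :=
  projPt 0 1 (Or.inr one_ne_zero)

/-- The point `[1 : t]`. -/
def onePt (t : E) : Projectivization E (Fin 2 → E) :=
  projPt 1 t (Or.inl one_ne_zero)

theorem vecMulLinear_injective (g : SpecialLinearGroup (Fin 2) E) :
    Function.Injective (g.1.vecMulLinear) := by
  intro x y hxy
  have h1 : x ᵥ* g.1 = y ᵥ* g.1 := by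
    simpa [Matrix.vecMulLinear_apply] using hxy
  have h3 : g.1 * (g⁻¹).1 = 1 := by
    rw [← Matrix.SpecialLinearGroup.coe_mul, mul_inv_cancel, Matrix.SpecialLinearGroup.coe_one]
  calc x = x ᵥ* (g.1 * (g⁻¹).1) := by rw [h3, Matrix.vecMul_one]
    _ = (x ᵥ* g.1) ᵥ* (g⁻¹).1 := (Matrix.vecMul_vecMul x g.1 (g⁻¹).1).symm
    _ = (y ᵥ* g.1) ᵥ* (g⁻¹).1 := by rw [h1]
    _ = y ᵥ* (g.1 * (g⁻¹).1) := Matrix.vecMul_vecMul y g.1 (g⁻¹).1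
    _ = y := by rw [h3, Matrix.vecMul_one]

/-- The right action `[w] · g := [w ᵥ* g]` of `SL₂(E)` on the projective line
(rows vectors times matrix). -/
def ract (x : Projectivization E (Fin 2 → E)) (g : SpecialLinearGroup (Fin 2) E) :
    Projectivization E (Fin 2 → E) :=
  Projectivization.map (g.1.vecMulLinear) (vecMulLinear_injective g) x

/-- The orbit of `x` under a set `Γ` of elements of `SL₂(E)` (acting on the right). -/
def orbitOf (Γ : Set (SpecialLinearGroup (Fin 2) E))
    (x : Projectivization E (Fin 2 → E)) : Set (Projectivization E (Fin 2 → E)) :=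
  {y | ∃ g ∈ Γ, y = ract x g}

variable (ν : DiscreteVal E) (π : E)

/-- The principal congruence subgroup `Γ_k` of level `k` (as a subset of `SL₂(E)`):
integral matrices congruent to the identity modulo `π^k`. -/
def congrSub (k : ℕ) : Set (SpecialLinearGroup (Fin 2) E) :=
  {g | ∀ i j, g.1 i j - (1 : Matrix (Fin 2) (Fin 2) E) i j ∈ ν.ball π (k : ℤ)}

/-- The maximal compact subgroup `U = SL₂(O_E)` (as a subset of `SL₂(E)`). -/
def slIntegral : Set (SpecialLinearGroup (Fin 2) E) :=
  {g | ∀ i j, g.1 i j ∈ ν.O}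

/-- The Iwahori subgroup `Γ₀` (as a subset): integral matrices whose
lower-left entry lies in `πO_E`. -/
def iwahori : Set (SpecialLinearGroup (Fin 2) E) :=
  {g | (∀ i j, g.1 i j ∈ ν.O) ∧ g.1 1 0 ∈ ν.ball π 1}

/-- The subgroup `U' = diag(1,π) SL₂(O_E) diag(1,π)⁻¹` (as a subset), described
by entry conditions. -/
def slConj : Set (SpecialLinearGroup (Fin 2) E) :=
  {g | g.1 0 0 ∈ ν.O ∧ g.1 1 1 ∈ ν.O ∧ g.1 0 1 ∈ ν.ball π (-1) ∧ g.1 1 0 ∈ ν.ball π 1}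

end ProjLine

section ProjLemmas
variable {E : Type} [Field E]

theorem vec_ne_zero {a b : E} (h : a ≠ 0 ∨ b ≠ 0) : ![a, b] ≠ 0 := by
  intro hc
  rcases h with h | h
  · exact h (by simpa using congrFun hc 0)
  · exact h (by simpa using congrFun hc 1)

theorem projPt_eq_mk (a b : E) (h : a ≠ 0 ∨ b ≠ 0) :
    projPt a b h = Projectivization.mk E ![a, b] (vec_ne_zero h) := rfl

theorem projPt_smul (a b c : E) (hc : c ≠ 0) (h : a ≠ 0 ∨ b ≠ 0) :
    projPt (c * a) (c * b) (by rcases h with h|h; exacts [Or.inl (mul_ne_zero hc h), Or.inr (mul_ne_zero hc h)]) = projPt a b h := by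
  rw [projPt_eq_mk, projPt_eq_mk, Projectivization.mk_eq_mk_iff']
  exact ⟨c, by funext i; fin_cases i <;> simp [Matrix.smul_cons]⟩

theorem onePt_inj {t t' : E} (h : onePt t = onePt t') : t = t' := by
  rw [onePt, onePt, projPt_eq_mk, projPt_eq_mk, Projectivization.mk_eq_mk_iff'] at h
  obtain ⟨c, hc⟩ := h
  have h0 : c * 1 = 1 := by simpa using congrFun hc 0
  have h1 : c * t' = t := by simpa using congrFun hc 1
  rw [mul_one] at h0
  rw [h0, one_mul] at h1
  exact h1.symm

theorem infty_ne_onePt (t : E) : inftyPt E ≠ onePt t := by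
  intro h
  rw [inftyPt, onePt, projPt_eq_mk, projPt_eq_mk, Projectivization.mk_eq_mk_iff'] at h
  obtain ⟨c, hc⟩ := h
  have h0 : c = 0 := by simpa using congrFun hc 0
  have h1 : c * t = 1 := by simpa using congrFun hc 1
  rw [h0, zero_mul] at h1
  exact zero_ne_one h1

theorem pt_cases (x : Projectivization E (Fin 2 → E)) :
    x = inftyPt E ∨ ∃ t : E, x = onePt t := by
  induction x with
  | h w hw =>
    rcases eq_or_ne (w 0) 0 with h0 | h0
    · left
      have hw1 : w 1 ≠ 0 := by
        intro h1; apply hw; funext i; fin_cases i <;> simp [h0, h1]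
      rw [inftyPt, projPt_eq_mk, Projectivization.mk_eq_mk_iff']
      refine ⟨w 1, ?_⟩
      funext i; fin_cases i <;> simp [Matrix.smul_cons, h0]
    · right
      refine ⟨w 1 / w 0, ?_⟩
      rw [onePt, projPt_eq_mk, Projectivization.mk_eq_mk_iff']
      refine ⟨w 0, ?_⟩
      funext i; fin_cases i <;> simp [Matrix.smul_cons] <;> field_simp

theorem vecMul_fin2 (a b : E) (M : Matrix (Fin 2) (Fin 2) E) :
    ![a, b] ᵥ* M = ![a * M 0 0 + b * M 1 0, a * M 0 1 + b * M 1 1] := by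
  funext j
  rw [Matrix.vecMul, dotProduct]
  fin_cases j <;> simp [Fin.sum_univ_two]

theorem ract_mk (w : Fin 2 → E) (hw : w ≠ 0) (g : SpecialLinearGroup (Fin 2) E) :
    ract (Projectivization.mk E w hw) g
      = Projectivization.mk E (w ᵥ* g.1)
          (fun hc => hw (vecMulLinear_injective g
            (by simpa [Matrix.vecMulLinear_apply] using hc))) := rfl

end ProjLemmas

section GroupLemmas
variable {E : Type} [Field E] {ν : DiscreteVal E} {π : E}

theorem ract_one (x : Projectivization E (Fin 2 → E)) : ract x (1 : SpecialLinearGroup (Fin 2) E) = x := by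
  induction x with
  | h w hw =>
    rw [ract_mk]
    exact (Projectivization.mk_eq_mk_iff' E _ _ _ _).2 ⟨1, by simp⟩

theorem ract_mul (x : Projectivization E (Fin 2 → E)) (g h : SpecialLinearGroup (Fin 2) E) :
    ract x (g * h) = ract (ract x g) h := by
  induction x with
  | h w hw =>
    rw [ract_mk, ract_mk, ract_mk]
    exact (Projectivization.mk_eq_mk_iff' E _ _ _ _).2 ⟨1, by simp [Matrix.vecMul_vecMul]⟩

theorem one_mem_ball_zero (hπ : ν.IsUniformizer π) : (1 : E) ∈ ν.ball π 0 :=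
  ν.mem_ball_of_v hπ (le_of_eq ν.v_one.symm)

theorem mem_congrSub_iff {k : ℕ} {g : SpecialLinearGroup (Fin 2) E} :
    g ∈ congrSub ν π k ↔ g.1 0 0 - 1 ∈ ν.ball π (k:ℤ) ∧ g.1 0 1 ∈ ν.ball π (k:ℤ) ∧
      g.1 1 0 ∈ ν.ball π (k:ℤ) ∧ g.1 1 1 - 1 ∈ ν.ball π (k:ℤ) := by
  constructor
  · intro h
    refine ⟨?_, ?_, ?_, ?_⟩
    · simpa [Matrix.one_apply] using h 0 0
    · simpa [Matrix.one_apply] using h 0 1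
    · simpa [Matrix.one_apply] using h 1 0
    · simpa [Matrix.one_apply] using h 1 1
  · rintro ⟨h1, h2, h3, h4⟩ i j
    fin_cases i <;> fin_cases j <;> simpa [Matrix.one_apply] using (by assumption)

theorem entry_mem (hπ : ν.IsUniformizer π) {k : ℕ} {g : SpecialLinearGroup (Fin 2) E}
    (hg : g ∈ congrSub ν π k) (i j : Fin 2) : g.1 i j ∈ ν.ball π 0 := by
  have h := hg i j
  have h2 : (1 : Matrix (Fin 2) (Fin 2) E) i j ∈ ν.ball π 0 := by
    rcases eq_or_ne i j with rfl | hij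
    · simpa [Matrix.one_apply] using one_mem_ball_zero hπ
    · simp [Matrix.one_apply, hij]
      exact ν.zero_mem_ball 0
  have h3 : g.1 i j = (g.1 i j - (1 : Matrix (Fin 2) (Fin 2) E) i j) + (1 : Matrix (Fin 2) (Fin 2) E) i j := by ring
  rw [h3]
  exact ν.ball_add hπ (ν.ball_anti hπ (Int.ofNat_nonneg k) h) h2

theorem ball_zero_mul (hπ : ν.IsUniformizer π) {m : ℤ} {a b : E}
    (ha : a ∈ ν.ball π 0) (hb : b ∈ ν.ball π m) : a * b ∈ ν.ball π m := by
  simpa using ν.ball_mul hπ ha hb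

theorem one_mem_congrSub (hπ : ν.IsUniformizer π) (k : ℕ) :
    (1 : SpecialLinearGroup (Fin 2) E) ∈ congrSub ν π k := by
  intro i j
  simp only [Matrix.SpecialLinearGroup.coe_one, sub_self]
  exact ν.zero_mem_ball _

theorem mul_mem_congrSub (hπ : ν.IsUniformizer π) {k : ℕ}
    {g h : SpecialLinearGroup (Fin 2) E}
    (hg : g ∈ congrSub ν π k) (hh : h ∈ congrSub ν π k) : g * h ∈ congrSub ν π k := by
  intro i j
  have key : (g * h).1 i j - (1 : Matrix (Fin 2) (Fin 2) E) i j
      = g.1 i 0 * (h.1 0 j - (1 : Matrix (Fin 2) (Fin 2) E) 0 j)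
        + g.1 i 1 * (h.1 1 j - (1 : Matrix (Fin 2) (Fin 2) E) 1 j)
        + (g.1 i j - (1 : Matrix (Fin 2) (Fin 2) E) i j) := by
    rw [Matrix.SpecialLinearGroup.coe_mul, Matrix.mul_apply, Fin.sum_univ_two]
    fin_cases i <;> fin_cases j <;> simp [Matrix.one_apply] <;> ring
  rw [key]
  exact ν.ball_add hπ (ν.ball_add hπ
    (ball_zero_mul hπ (entry_mem hπ hg i 0) (hh 0 j))
    (ball_zero_mul hπ (entry_mem hπ hg i 1) (hh 1 j))) (hg i j)

theorem inv_mem_congrSub (hπ : ν.IsUniformizer π) {k : ℕ}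
    {g : SpecialLinearGroup (Fin 2) E}
    (hg : g ∈ congrSub ν π k) : g⁻¹ ∈ congrSub ν π k := by
  rw [mem_congrSub_iff] at hg ⊢
  obtain ⟨h1, h2, h3, h4⟩ := hg
  rw [Matrix.SpecialLinearGroup.SL2_inv_expl g]
  refine ⟨by simpa using h4, by simpa using ν.ball_neg hπ h2,
    by simpa using ν.ball_neg hπ h3, by simpa using h1⟩

theorem mem_orbit_self (hπ : ν.IsUniformizer π) (k : ℕ)
    (x : Projectivization E (Fin 2 → E)) : x ∈ orbitOf (congrSub ν π k) x :=
  ⟨1, one_mem_congrSub hπ k, (ract_one x).symm⟩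

theorem orbit_eq_of_mem (hπ : ν.IsUniformizer π) {k : ℕ}
    {x y : Projectivization E (Fin 2 → E)} (h : y ∈ orbitOf (congrSub ν π k) x) :
    orbitOf (congrSub ν π k) y = orbitOf (congrSub ν π k) x := by
  obtain ⟨g, hg, rfl⟩ := h
  ext z
  constructor
  · rintro ⟨g', hg', rfl⟩
    exact ⟨g * g', mul_mem_congrSub hπ hg hg', (ract_mul x g g').symm⟩
  · rintro ⟨g', hg', rfl⟩
    refine ⟨g⁻¹ * g', mul_mem_congrSub hπ (inv_mem_congrSub hπ hg) hg', ?_⟩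
    rw [← ract_mul, ← mul_assoc, mul_inv_cancel, one_mul]

end GroupLemmas


section ActionLemmas
variable {E : Type} [Field E]

theorem ract_onePt (t : E) (g : SpecialLinearGroup (Fin 2) E)
    (hA : g.1 0 0 + t * g.1 1 0 ≠ 0) :
    ract (onePt t) g = onePt ((g.1 0 1 + t * g.1 1 1) / (g.1 0 0 + t * g.1 1 0)) := by
  rw [onePt, onePt, projPt_eq_mk, projPt_eq_mk, ract_mk]
  apply (Projectivization.mk_eq_mk_iff' E _ _ _ _).2
  refine ⟨g.1 0 0 + t * g.1 1 0, ?_⟩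
  rw [vecMul_fin2]
  funext i
  fin_cases i
  · simp
  · simp only [Matrix.smul_cons, smul_eq_mul, Matrix.smul_empty, Matrix.cons_val_one,
      Matrix.head_cons]
    field_simp
    try ring

theorem ract_infty (g : SpecialLinearGroup (Fin 2) E) (h : g.1 1 0 ≠ 0) :
    ract (inftyPt E) g = onePt (g.1 1 1 / g.1 1 0) := by
  rw [inftyPt, onePt, projPt_eq_mk, projPt_eq_mk, ract_mk]
  apply (Projectivization.mk_eq_mk_iff' E _ _ _ _).2
  refine ⟨g.1 1 0, ?_⟩
  rw [vecMul_fin2]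
  funext i
  fin_cases i
  · simp
  · simp only [Matrix.smul_cons, smul_eq_mul, Matrix.smul_empty, Matrix.cons_val_one,
      Matrix.head_cons]
    simp
    field_simp

theorem ract_infty_zero (g : SpecialLinearGroup (Fin 2) E) (h : g.1 1 0 = 0)
    (h1 : g.1 1 1 ≠ 0) : ract (inftyPt E) g = inftyPt E := by
  rw [inftyPt, projPt_eq_mk, ract_mk]
  apply (Projectivization.mk_eq_mk_iff' E _ _ _ _).2
  refine ⟨g.1 1 1, ?_⟩
  rw [vecMul_fin2]
  funext i
  fin_cases i <;> simp [h]

/-- The elementary upper-triangular matrix `(1, c; 0, 1)` in `SL₂`. -/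
def upperT (c : E) : SpecialLinearGroup (Fin 2) E :=
  ⟨!![1, c; 0, 1], by simp [Matrix.det_fin_two_of]⟩

/-- The elementary lower-triangular matrix `(1, 0; c, 1)` in `SL₂`. -/
def lowerT (c : E) : SpecialLinearGroup (Fin 2) E :=
  ⟨!![1, 0; c, 1], by simp [Matrix.det_fin_two_of]⟩

@[simp] theorem upperT_00 (c : E) : (upperT c).1 0 0 = 1 := rfl
@[simp] theorem upperT_01 (c : E) : (upperT c).1 0 1 = c := rfl
@[simp] theorem upperT_10 (c : E) : (upperT c).1 1 0 = 0 := rfl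
@[simp] theorem upperT_11 (c : E) : (upperT c).1 1 1 = 1 := rfl
@[simp] theorem lowerT_00 (c : E) : (lowerT c).1 0 0 = 1 := rfl
@[simp] theorem lowerT_01 (c : E) : (lowerT c).1 0 1 = 0 := rfl
@[simp] theorem lowerT_10 (c : E) : (lowerT c).1 1 0 = c := rfl
@[simp] theorem lowerT_11 (c : E) : (lowerT c).1 1 1 = 1 := rfl

variable {ν : DiscreteVal E} {π : E}

theorem upperT_mem (hπ : ν.IsUniformizer π) {k : ℕ} {c : E} (hc : c ∈ ν.ball π (k:ℤ)) :
    upperT c ∈ congrSub ν π k := by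
  rw [mem_congrSub_iff]
  refine ⟨?_, ?_, ?_, ?_⟩ <;> simp [hc, ν.zero_mem_ball]

theorem lowerT_mem (hπ : ν.IsUniformizer π) {k : ℕ} {c : E} (hc : c ∈ ν.ball π (k:ℤ)) :
    lowerT c ∈ congrSub ν π k := by
  rw [mem_congrSub_iff]
  refine ⟨?_, ?_, ?_, ?_⟩ <;> simp [hc, ν.zero_mem_ball]

end ActionLemmas



/-!
STATEMENT 3: classification of the orbits of the principal congruence subgroup
`Γ_k` (`k ≥ 1`) acting on the right on `P¹(E)`.  The orbits are precisely:
(a) `{∞} ∪ {[1 : t] : t ∈ E^×, v(t) ≤ −k}` (the orbit of `∞`);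
(b) `{[1 : t] : t ∈ π^k O_E}` (the orbit of `[1 : 0]`);
(c) for `−k < i < k` and `s ∈ O_E^×`, the set
    `{[1 : π^i s u] : u ∈ 1 + π^{min(k−i,k+i)} O_E}` (the orbit of `[1 : π^i s]`),
    which depends only on the coset `s·(1 + π^{min(k−i,k+i)} O_E)`;
these sets are pairwise disjoint and partition `P¹(E)`.  Consequently the set of
`Γ_k`-orbits is in bijection with
`{∞} ⊔ {0} ⊔ ⨆_{i=−k+1}^{k−1} O_E^×/(1 + π^{min(k+i,k−i)} O_E)`.
-/

section Statement3

variable {E : Type} [Field E]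

/-- The set `{∞} ∪ {[1 : t] : v(t) ≤ −k}`. -/
def setA (ν : DiscreteVal E) (k : ℕ) : Set (Projectivization E (Fin 2 → E)) :=
  {inftyPt E} ∪ {y | ∃ t : E, t ≠ 0 ∧ ν.v t ≤ -(k : ℤ) ∧ y = onePt t}

/-- The set `{[1 : t] : t ∈ π^k O_E}`. -/
def setB (ν : DiscreteVal E) (π : E) (k : ℕ) : Set (Projectivization E (Fin 2 → E)) :=
  {y | ∃ t ∈ ν.ball π (k : ℤ), y = onePt t}

/-- The set `{[1 : π^i s u] : u ∈ 1 + π^{min(k−i,k+i)} O_E}`. -/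
def setC (ν : DiscreteVal E) (π : E) (k : ℕ) (i : ℤ) (s : E) :
    Set (Projectivization E (Fin 2 → E)) :=
  {y | ∃ u : E, u - 1 ∈ ν.ball π (min ((k : ℤ) - i) ((k : ℤ) + i)) ∧
    y = onePt (π ^ i * s * u)}

/-- The set of units of `O_E`, i.e. `{s : s ≠ 0 ∧ v s = 0}`. -/
def unitSet (ν : DiscreteVal E) : Set E := {s : E | s ≠ 0 ∧ ν.v s = 0}

/-- The space of `Γ`-orbits on `P¹(E)`. -/
def OrbitSpace (Γ : Set (SpecialLinearGroup (Fin 2) E)) : Type :=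
  Quot (fun x y : Projectivization E (Fin 2 → E) => y ∈ orbitOf Γ x)

/-- The quotient `O_E^×/(1 + π^m O_E)`. -/
def UnitCosets (ν : DiscreteVal E) (π : E) (m : ℤ) : Type :=
  Quot (fun s s' : {s : E // s ≠ 0 ∧ ν.v s = 0} => (s' : E) / (s : E) - 1 ∈ ν.ball π m)

/-- The index set `{∞} ⊔ {0} ⊔ ⨆_{−k<i<k} O_E^×/(1 + π^{min(k−i,k+i)} O_E)`. -/
def OrbitIndex (ν : DiscreteVal E) (π : E) (k : ℕ) : Type :=
  Unit ⊕ Unit ⊕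
    (Σ i : {i : ℤ // -(k : ℤ) < i ∧ i < (k : ℤ)},
      UnitCosets ν π (min ((k : ℤ) - i.1) ((k : ℤ) + i.1)))



section OrbitComp
variable {E : Type} [Field E] {ν : DiscreteVal E} {π : E}

theorem DiscreteVal.v_div (ν : DiscreteVal E) {a b : E} (ha : a ≠ 0) (hb : b ≠ 0) :
    ν.v (a / b) = ν.v a - ν.v b := by
  rw [div_eq_mul_inv, ν.v_mul _ _ ha (inv_ne_zero hb), ν.v_inv hb]
  ring

theorem DiscreteVal.unit_of_sub_one (ν : DiscreteVal E) (hπ : ν.IsUniformizer π) {m : ℤ} {a : E}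
    (ha : a - 1 ∈ ν.ball π m) (hm : 1 ≤ m) : a ≠ 0 ∧ ν.v a = 0 := by
  have h := ν.one_add_unit hπ ha hm
  rwa [show (1:E) + (a - 1) = a by ring] at h

theorem orbit_infty (hπ : ν.IsUniformizer π) {k : ℕ} (hk : 1 ≤ k) :
    orbitOf (congrSub ν π k) (inftyPt E) = setA ν k := by
  have hk1 : (1:ℤ) ≤ (k:ℤ) := by exact_mod_cast hk
  ext x
  constructor
  · rintro ⟨g, hg, rfl⟩
    rw [mem_congrSub_iff] at hg
    obtain ⟨h1, h2, h3, h4⟩ := hg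
    have hd := ν.unit_of_sub_one hπ (ν.ball_anti hπ hk1 h4) le_rfl
    rcases eq_or_ne (g.1 1 0) 0 with h0 | h0
    · rw [ract_infty_zero g h0 hd.1]
      exact Or.inl rfl
    · rw [ract_infty g h0]
      right
      refine ⟨g.1 1 1 / g.1 1 0, div_ne_zero hd.1 h0, ?_, rfl⟩
      have hv10 : (k:ℤ) ≤ ν.v (g.1 1 0) := ((ν.mem_ball_iff hπ).1 h3).resolve_left h0
      rw [ν.v_div hd.1 h0, hd.2]
      omega
  · rintro (rfl | ⟨t, ht0, htv, rfl⟩)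
    · exact mem_orbit_self hπ k _
    · have hmem : t⁻¹ ∈ ν.ball π (k:ℤ) := by
        apply ν.mem_ball_of_v hπ
        rw [ν.v_inv ht0]
        omega
      refine ⟨lowerT t⁻¹, lowerT_mem hπ hmem, ?_⟩
      rw [ract_infty _ (by simpa using inv_ne_zero ht0)]
      simp

theorem orbit_zero (hπ : ν.IsUniformizer π) {k : ℕ} (hk : 1 ≤ k) :
    orbitOf (congrSub ν π k) (onePt (0:E)) = setB ν π k := by
  have hk1 : (1:ℤ) ≤ (k:ℤ) := by exact_mod_cast hk
  ext x
  constructor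
  · rintro ⟨g, hg, rfl⟩
    rw [mem_congrSub_iff] at hg
    obtain ⟨h1, h2, h3, h4⟩ := hg
    have hd := ν.unit_of_sub_one hπ (ν.ball_anti hπ hk1 h1) le_rfl
    have hA : g.1 0 0 + 0 * g.1 1 0 ≠ 0 := by rw [zero_mul, add_zero]; exact hd.1
    rw [ract_onePt 0 g hA]
    refine ⟨g.1 0 1 / g.1 0 0, ν.div_unit_mem_ball hπ h2 hd.1 hd.2, ?_⟩
    congr 1
    rw [zero_mul, zero_mul, add_zero, add_zero]
  · rintro ⟨t, ht, rfl⟩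
    refine ⟨upperT t, upperT_mem hπ ht, ?_⟩
    rw [ract_onePt 0 (upperT t) (by simp)]
    congr 1
    simp

theorem orbit_mid (hπ : ν.IsUniformizer π) {k : ℕ} (hk : 1 ≤ k) {i : ℤ}
    (hi1 : -(k:ℤ) < i) (hi2 : i < (k:ℤ)) {s : E} (hs : s ∈ unitSet ν) :
    orbitOf (congrSub ν π k) (onePt (π ^ i * s)) = setC ν π k i s := by
  obtain ⟨hs0, hsv⟩ := hs
  have hk1 : (1:ℤ) ≤ (k:ℤ) := by exact_mod_cast (by omega : (1:ℤ) ≤ k)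
  set m : ℤ := min ((k:ℤ) - i) ((k:ℤ) + i) with hm
  have hm1 : 1 ≤ m := by omega
  have hmk : m ≤ (k:ℤ) := by omega
  have hw0 : (π : E) ^ i ≠ 0 := zpow_ne_zero _ hπ.1
  have hwne : π ^ i * s ≠ 0 := mul_ne_zero hw0 hs0
  have hwv : ν.v (π ^ i * s) = i := by rw [ν.v_mul _ _ hw0 hs0, ν.v_zpow hπ, hsv, add_zero]
  have hwmem : π ^ i * s ∈ ν.ball π i := ν.mem_ball_of_v hπ (le_of_eq hwv.symm)
  ext x
  simp only [setC, Set.mem_setOf_eq, ← hm]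
  constructor
  · rintro ⟨g, hg, rfl⟩
    rw [mem_congrSub_iff] at hg
    obtain ⟨h1, h2, h3, h4⟩ := hg
    have hz : (g.1 0 0 + π ^ i * s * g.1 1 0) - 1 ∈ ν.ball π m := by
      rw [show (g.1 0 0 + π ^ i * s * g.1 1 0) - 1 = (g.1 0 0 - 1) + π ^ i * s * g.1 1 0 by ring]
      exact ν.ball_add hπ (ν.ball_anti hπ hmk h1)
        (ν.ball_anti hπ (by omega) (ν.ball_mul hπ hwmem h3))
    have hA := ν.unit_of_sub_one hπ hz hm1
    rw [ract_onePt _ g hA.1]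
    set A := g.1 0 0 + π ^ i * s * g.1 1 0 with hAdef
    set B := g.1 0 1 + π ^ i * s * g.1 1 1 with hBdef
    refine ⟨B / A / (π ^ i * s), ?_, ?_⟩
    · have hAw : A * (π ^ i * s) ≠ 0 := mul_ne_zero hA.1 hwne
      rw [show B / A / (π ^ i * s) - 1 = (B - A * (π ^ i * s)) / (A * (π ^ i * s)) by
        rw [div_div, div_sub_one hAw]]
      apply ν.div_mem_ball hπ _ hAw
      have hvAw : ν.v (A * (π ^ i * s)) = i := by
        rw [ν.v_mul _ _ hA.1 hwne, hA.2, hwv, zero_add]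
      rw [hvAw]
      rw [show B - A * (π ^ i * s) = g.1 0 1 + π ^ i * s * (g.1 1 1 - 1)
          - π ^ i * s * (g.1 0 0 - 1) - (π ^ i * s) * (π ^ i * s) * g.1 1 0 by
        rw [hAdef, hBdef]; ring]
      exact ν.ball_sub hπ (ν.ball_sub hπ
        (ν.ball_add hπ (ν.ball_anti hπ (by omega) h2)
          (ν.ball_anti hπ (by omega) (ν.ball_mul hπ hwmem h4)))
        (ν.ball_anti hπ (by omega) (ν.ball_mul hπ hwmem h1)))
        (ν.ball_anti hπ (by omega) (ν.ball_mul hπ (ν.ball_mul hπ hwmem hwmem) h3))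
    · congr 1
      rw [mul_comm, div_mul_cancel₀ _ hwne]
  · rintro ⟨u, hu, rfl⟩
    have hun := ν.unit_of_sub_one hπ hu hm1
    rcases le_or_gt 0 i with hi0 | hi0
    · set c := π ^ i * s * (u - 1) with hc
      have hcmem : c ∈ ν.ball π (k:ℤ) :=
        ν.ball_anti hπ (by omega) (ν.ball_mul hπ hwmem hu)
      refine ⟨upperT c, upperT_mem hπ hcmem, ?_⟩
      rw [ract_onePt _ (upperT c) (by simp)]
      congr 1
      simp only [upperT_00, upperT_01, upperT_10, upperT_11]
      field_simp
      ring
    · set c := (1 - u) / (u * (π ^ i * s)) with hc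
      have huw : u * (π ^ i * s) ≠ 0 := mul_ne_zero hun.1 hwne
      have hcmem : c ∈ ν.ball π (k:ℤ) := by
        apply ν.div_mem_ball hπ _ huw
        rw [ν.v_mul _ _ hun.1 hwne, hun.2, hwv, zero_add]
        rw [show (1:E) - u = -(u - 1) by ring]
        exact ν.ball_neg hπ (ν.ball_anti hπ (by omega) hu)
      have h5 : u * ((1:E) + π ^ i * s * c) = 1 := by
        rw [hc]
        field_simp [hun.1]
        try ring
        try exact Or.inl trivial
      have hAeq : (1:E) + π ^ i * s * c = u⁻¹ := eq_inv_of_mul_eq_one_right h5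
      refine ⟨lowerT c, lowerT_mem hπ hcmem, ?_⟩
      have hAne : (upperT c).1 0 0 + π ^ i * s * (lowerT c).1 1 0 ≠ 0 := by
        simp only [upperT_00, lowerT_10]
        rw [hAeq]
        exact inv_ne_zero hun.1
      rw [ract_onePt _ (lowerT c) (by simpa using hAne)]
      congr 1
      simp only [lowerT_00, lowerT_01, lowerT_10, lowerT_11]
      rw [mul_one, zero_add, hAeq, div_eq_mul_inv, inv_inv]

end OrbitComp




section SetLemmas
variable {E : Type} [Field E] {ν : DiscreteVal E} {π : E}

/-- Description of elements of `setC`. -/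
theorem setC_elt (hπ : ν.IsUniformizer π) {k : ℕ} (hk : 1 ≤ k) {i : ℤ}
    (hi1 : -(k:ℤ) < i) (hi2 : i < (k:ℤ)) {s : E} (hs : s ∈ unitSet ν)
    {x : Projectivization E (Fin 2 → E)} (hx : x ∈ setC ν π k i s) :
    ∃ t : E, t ≠ 0 ∧ ν.v t = i ∧ x = onePt t ∧
      t / (π ^ i * s) - 1 ∈ ν.ball π (min ((k:ℤ) - i) ((k:ℤ) + i)) := by
  obtain ⟨u, hu, rfl⟩ := hx
  have hm1 : 1 ≤ min ((k:ℤ) - i) ((k:ℤ) + i) := by omega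
  have hun := ν.unit_of_sub_one hπ hu hm1
  have hw0 : (π : E) ^ i ≠ 0 := zpow_ne_zero _ hπ.1
  have hwne : π ^ i * s ≠ 0 := mul_ne_zero hw0 hs.1
  refine ⟨π ^ i * s * u, mul_ne_zero hwne hun.1, ?_, rfl, ?_⟩
  · rw [ν.v_mul _ _ hwne hun.1, ν.v_mul _ _ hw0 hs.1, ν.v_zpow hπ, hs.2, hun.2]
    ring
  · rw [mul_div_cancel_left₀ _ hwne]
    exact hu

theorem setA_setB_disjoint (hπ : ν.IsUniformizer π) {k : ℕ} (hk : 1 ≤ k) :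
    Disjoint (setA ν k) (setB ν π k) := by
  rw [Set.disjoint_left]
  rintro x (rfl | ⟨t, ht0, htv, rfl⟩) ⟨t', ht', heq⟩
  · exact infty_ne_onePt t' heq
  · obtain rfl := onePt_inj heq
    rcases (ν.mem_ball_iff hπ).1 ht' with rfl | h
    · exact ht0 rfl
    · omega

theorem setA_setC_disjoint (hπ : ν.IsUniformizer π) {k : ℕ} (hk : 1 ≤ k) {i : ℤ}
    (hi1 : -(k:ℤ) < i) (hi2 : i < (k:ℤ)) {s : E} (hs : s ∈ unitSet ν) :
    Disjoint (setA ν k) (setC ν π k i s) := by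
  rw [Set.disjoint_left]
  rintro x (rfl | ⟨t, ht0, htv, rfl⟩) hx <;>
    obtain ⟨t', ht'0, ht'v, heq, _⟩ := setC_elt hπ hk hi1 hi2 hs hx
  · exact infty_ne_onePt t' heq
  · obtain rfl := onePt_inj heq
    omega

theorem setB_setC_disjoint (hπ : ν.IsUniformizer π) {k : ℕ} (hk : 1 ≤ k) {i : ℤ}
    (hi1 : -(k:ℤ) < i) (hi2 : i < (k:ℤ)) {s : E} (hs : s ∈ unitSet ν) :
    Disjoint (setB ν π k) (setC ν π k i s) := by
  rw [Set.disjoint_left]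
  rintro x ⟨t, ht, rfl⟩ hx
  obtain ⟨t', ht'0, ht'v, heq, _⟩ := setC_elt hπ hk hi1 hi2 hs hx
  obtain rfl := onePt_inj heq
  rcases (ν.mem_ball_iff hπ).1 ht with rfl | h
  · exact ht'0 rfl
  · omega

theorem setC_setC (hπ : ν.IsUniformizer π) {k : ℕ} (hk : 1 ≤ k) {i i' : ℤ}
    (hi1 : -(k:ℤ) < i) (hi2 : i < (k:ℤ)) (hi1' : -(k:ℤ) < i') (hi2' : i' < (k:ℤ))
    {s s' : E} (hs : s ∈ unitSet ν) (hs' : s' ∈ unitSet ν)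
    (h : (setC ν π k i s ∩ setC ν π k i' s').Nonempty) :
    i = i' ∧ s' / s - 1 ∈ ν.ball π (min ((k:ℤ) - i) ((k:ℤ) + i)) := by
  obtain ⟨x, hx, hx'⟩ := h
  obtain ⟨u, hu, rfl⟩ := hx
  obtain ⟨u', hu', heq⟩ := hx'
  have hm1 : 1 ≤ min ((k:ℤ) - i) ((k:ℤ) + i) := by omega
  have hm1' : 1 ≤ min ((k:ℤ) - i') ((k:ℤ) + i') := by omega
  have hun := ν.unit_of_sub_one hπ hu hm1
  have hun' := ν.unit_of_sub_one hπ hu' hm1'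
  have hw0 : (π : E) ^ i ≠ 0 := zpow_ne_zero _ hπ.1
  have hw0' : (π : E) ^ i' ≠ 0 := zpow_ne_zero _ hπ.1
  obtain heq2 := onePt_inj heq
  have hii : i = i' := by
    have hv1 : ν.v (π ^ i * s * u) = i := by
      rw [ν.v_mul _ _ (mul_ne_zero hw0 hs.1) hun.1, ν.v_mul _ _ hw0 hs.1,
        ν.v_zpow hπ, hs.2, hun.2]; ring
    have hv2 : ν.v (π ^ i' * s' * u') = i' := by
      rw [ν.v_mul _ _ (mul_ne_zero hw0' hs'.1) hun'.1, ν.v_mul _ _ hw0' hs'.1,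
        ν.v_zpow hπ, hs'.2, hun'.2]; ring
    rw [← hv1, ← hv2, heq2]
  subst hii
  refine ⟨rfl, ?_⟩
  have hsu : s * u = s' * u' := by
    have := heq2
    field_simp at this
    exact mul_left_cancel₀ hw0 (by linear_combination π ^ i * this)
  have hdiv : s' / s = u / u' := by
    rw [div_eq_div_iff hs.1 hun'.1]
    linear_combination -hsu
  rw [hdiv, ((by rw [sub_div, div_self hun'.1]) : (u - u') / u' = u / u' - 1).symm]
  exact ν.div_unit_mem_ball hπ
    (by simpa using ν.ball_sub hπ hu hu') hun'.1 hun'.2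

theorem setC_mono (hπ : ν.IsUniformizer π) {k : ℕ} (hk : 1 ≤ k) {i : ℤ}
    (hi1 : -(k:ℤ) < i) (hi2 : i < (k:ℤ)) {s s' : E} (hs : s ∈ unitSet ν) (hs' : s' ∈ unitSet ν)
    (h : s' / s - 1 ∈ ν.ball π (min ((k:ℤ) - i) ((k:ℤ) + i))) :
    setC ν π k i s' ⊆ setC ν π k i s := by
  rintro x ⟨u, hu, rfl⟩
  have hm1 : 1 ≤ min ((k:ℤ) - i) ((k:ℤ) + i) := by omega
  have hrat : s' / s ≠ 0 ∧ ν.v (s' / s) = 0 := by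
    refine ⟨div_ne_zero hs'.1 hs.1, ?_⟩
    rw [ν.v_div hs'.1 hs.1, hs.2, hs'.2]
    ring
  refine ⟨s' / s * u, ?_, ?_⟩
  · rw [show s' / s * u - 1 = s' / s * (u - 1) + (s' / s - 1) from by ring]
    refine ν.ball_add hπ ?_ h
    exact ball_zero_mul hπ (ν.mem_ball_of_v hπ (le_of_eq hrat.2.symm)) hu
  · congr 1
    field_simp [hs.1]

theorem setC_coset (hπ : ν.IsUniformizer π) {k : ℕ} (hk : 1 ≤ k) {i : ℤ}
    (hi1 : -(k:ℤ) < i) (hi2 : i < (k:ℤ)) {s s' : E} (hs : s ∈ unitSet ν) (hs' : s' ∈ unitSet ν)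
    (h : s' / s - 1 ∈ ν.ball π (min ((k:ℤ) - i) ((k:ℤ) + i))) :
    setC ν π k i s = setC ν π k i s' := by
  have h' : s / s' - 1 ∈ ν.ball π (min ((k:ℤ) - i) ((k:ℤ) + i)) := by
    have hss : s / s' ≠ 0 ∧ ν.v (s / s') = 0 := by
      refine ⟨div_ne_zero hs.1 hs'.1, ?_⟩
      rw [ν.v_div hs.1 hs'.1, hs.2, hs'.2]
      ring
    rw [show s / s' - 1 = -((s' / s - 1) * (s / s')) from by field_simp [hs.1, hs'.1]; try ring]
    apply ν.ball_neg hπ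
    simpa using ν.ball_mul hπ h (ν.mem_ball_of_v hπ (le_of_eq hss.2.symm))
  exact le_antisymm (setC_mono hπ hk hi1 hi2 hs' hs h') (setC_mono hπ hk hi1 hi2 hs hs' h)

theorem sets_cover (hπ : ν.IsUniformizer π) {k : ℕ} (hk : 1 ≤ k) :
    (setA ν k ∪ setB ν π k ∪
      ⋃ i ∈ Set.Ioo (-(k:ℤ)) (k:ℤ), ⋃ s ∈ unitSet ν, setC ν π k i s) = Set.univ := by
  have hk1 : (1:ℤ) ≤ (k:ℤ) := by exact_mod_cast hk
  ext x
  simp only [Set.mem_univ, iff_true, Set.mem_union, Set.mem_iUnion]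
  rcases pt_cases x with rfl | ⟨t, rfl⟩
  · exact Or.inl (Or.inl (Or.inl rfl))
  rcases eq_or_ne t 0 with rfl | ht0
  · exact Or.inl (Or.inr ⟨0, ν.zero_mem_ball _, rfl⟩)
  rcases le_or_gt (ν.v t) (-(k:ℤ)) with h | h
  · exact Or.inl (Or.inl (Or.inr ⟨t, ht0, h, rfl⟩))
  rcases le_or_gt (k:ℤ) (ν.v t) with h2 | h2
  · exact Or.inl (Or.inr ⟨t, ν.mem_ball_of_v hπ h2, rfl⟩)
  · right
    have hp0 : (π:E) ^ (ν.v t) ≠ 0 := zpow_ne_zero _ hπ.1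
    have hvt : ν.v (t / π ^ (ν.v t)) = 0 := by
      rw [ν.v_div ht0 hp0, ν.v_zpow hπ]
      ring
    refine ⟨ν.v t, ⟨h, h2⟩, t / π ^ (ν.v t), ⟨div_ne_zero ht0 hp0, hvt⟩,
      1, by simpa using ν.zero_mem_ball _, ?_⟩
    congr 1
    field_simp

end SetLemmas

section Bij
variable {E : Type} [Field E] {ν : DiscreteVal E} {π : E}

theorem mem_setC_self (hπ : ν.IsUniformizer π) {k : ℕ} (hk : 1 ≤ k) {i : ℤ}
    {s : E} : onePt (π ^ i * s) ∈ setC ν π k i s := by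
  refine ⟨1, by simpa using ν.zero_mem_ball _, ?_⟩
  rw [mul_one]

theorem orbit_cases (hπ : ν.IsUniformizer π) {k : ℕ} (hk : 1 ≤ k)
    (x : Projectivization E (Fin 2 → E)) :
    orbitOf (congrSub ν π k) x = setA ν k ∨
    orbitOf (congrSub ν π k) x = setB ν π k ∨
    ∃ i : ℤ, -(k:ℤ) < i ∧ i < (k:ℤ) ∧ ∃ s ∈ unitSet ν,
      orbitOf (congrSub ν π k) x = setC ν π k i s := by
  have hx : x ∈ (setA ν k ∪ setB ν π k ∪
      ⋃ i ∈ Set.Ioo (-(k:ℤ)) (k:ℤ), ⋃ s ∈ unitSet ν, setC ν π k i s) := by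
    rw [sets_cover hπ hk]; trivial
  simp only [Set.mem_union, Set.mem_iUnion] at hx
  rcases hx with (hA | hB) | ⟨i, hi, s, hs, hC⟩
  · left
    rw [← orbit_infty hπ hk] at hA
    rw [orbit_eq_of_mem hπ hA, orbit_infty hπ hk]
  · right; left
    rw [← orbit_zero hπ hk] at hB
    rw [orbit_eq_of_mem hπ hB, orbit_zero hπ hk]
  · right; right
    refine ⟨i, hi.1, hi.2, s, hs, ?_⟩
    rw [← orbit_mid hπ hk hi.1 hi.2 hs] at hC
    rw [orbit_eq_of_mem hπ hC, orbit_mid hπ hk hi.1 hi.2 hs]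

theorem orbit_eq_of_quot (hπ : ν.IsUniformizer π) {k : ℕ}
    {x y : Projectivization E (Fin 2 → E)}
    (h : (Quot.mk _ x : OrbitSpace (congrSub ν π k)) = Quot.mk _ y) :
    orbitOf (congrSub ν π k) x = orbitOf (congrSub ν π k) y := by
  have h2 := Quot.eqvGen_exact h
  clear h
  induction h2 with
  | rel a b hab => exact (orbit_eq_of_mem hπ hab).symm
  | refl a => rfl
  | symm a b _ ih => exact ih.symm
  | trans a b c _ _ ih1 ih2 => exact ih1.trans ih2

/-- The map from the index set to the orbit space. -/
def psi (ν : DiscreteVal E) (π : E) (hπ : ν.IsUniformizer π) (k : ℕ) (hk : 1 ≤ k) :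
    OrbitIndex ν π k → OrbitSpace (congrSub ν π k) := fun a =>
  match a with
  | Sum.inl _ => Quot.mk _ (inftyPt E)
  | Sum.inr (Sum.inl _) => Quot.mk _ (onePt (0:E))
  | Sum.inr (Sum.inr ⟨⟨i, hi⟩, q⟩) =>
      Quot.lift (fun s : {s : E // s ≠ 0 ∧ ν.v s = 0} =>
          (Quot.mk _ (onePt (π ^ i * s.1)) : OrbitSpace (congrSub ν π k)))
        (fun s s' hss => by
          apply Quot.sound
          rw [orbit_mid hπ hk hi.1 hi.2 s.2, setC_coset hπ hk hi.1 hi.2 s.2 s'.2 hss]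
          exact mem_setC_self hπ hk) q

theorem psi_surjective (ν : DiscreteVal E) (π : E) (hπ : ν.IsUniformizer π) (k : ℕ)
    (hk : 1 ≤ k) : Function.Surjective (psi ν π hπ k hk) := by
  intro q
  induction q using Quot.ind with
  | _ x =>
    have hself := mem_orbit_self hπ k x
    rcases orbit_cases hπ hk x with h | h | ⟨i, hi1, hi2, s, hs, h⟩
    · refine ⟨Sum.inl ⟨⟩, ?_⟩
      apply Quot.sound
      rw [orbit_infty hπ hk, ← h]
      exact hself
    · refine ⟨Sum.inr (Sum.inl ⟨⟩), ?_⟩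
      apply Quot.sound
      rw [orbit_zero hπ hk, ← h]
      exact hself
    · refine ⟨Sum.inr (Sum.inr ⟨⟨i, hi1, hi2⟩, Quot.mk _ ⟨s, hs⟩⟩), ?_⟩
      apply Quot.sound
      rw [orbit_mid hπ hk hi1 hi2 hs, ← h]
      exact hself

theorem psi_injective (ν : DiscreteVal E) (π : E) (hπ : ν.IsUniformizer π) (k : ℕ)
    (hk : 1 ≤ k) : Function.Injective (psi ν π hπ k hk) := by
  have key : ∀ a : OrbitIndex ν π k, ∃ x : Projectivization E (Fin 2 → E),
      psi ν π hπ k hk a = Quot.mk _ x ∧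
      ((a = Sum.inl ⟨⟩ ∧ orbitOf (congrSub ν π k) x = setA ν k) ∨
       (a = Sum.inr (Sum.inl ⟨⟩) ∧ orbitOf (congrSub ν π k) x = setB ν π k) ∨
       (∃ i : ℤ, ∃ hi : -(k:ℤ) < i ∧ i < (k:ℤ), ∃ s : E, ∃ hs : s ∈ unitSet ν,
         a = Sum.inr (Sum.inr ⟨⟨i, hi⟩, Quot.mk _ ⟨s, hs⟩⟩) ∧
         orbitOf (congrSub ν π k) x = setC ν π k i s)) := by
    rintro (⟨⟩ | ⟨⟩ | ⟨⟨i, hi⟩, q⟩)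
    · exact ⟨inftyPt E, rfl, Or.inl ⟨rfl, orbit_infty hπ hk⟩⟩
    · exact ⟨onePt 0, rfl, Or.inr (Or.inl ⟨rfl, orbit_zero hπ hk⟩)⟩
    · induction q using Quot.ind with
      | _ s =>
        exact ⟨onePt (π ^ i * s.1), rfl, Or.inr (Or.inr ⟨i, hi, s.1, s.2, rfl,
          orbit_mid hπ hk hi.1 hi.2 s.2⟩)⟩
  intro a b hab
  obtain ⟨x, hxa, ha⟩ := key a
  obtain ⟨y, hyb, hb⟩ := key b
  have horb : orbitOf (congrSub ν π k) x = orbitOf (congrSub ν π k) y :=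
    orbit_eq_of_quot hπ (by rw [← hxa, ← hyb, hab])
  have hxy : y ∈ orbitOf (congrSub ν π k) x := horb ▸ mem_orbit_self hπ k y
  rcases ha with ⟨rfl, hoa⟩ | ⟨rfl, hoa⟩ | ⟨i, hi, s, hs, rfl, hoa⟩ <;>
    rcases hb with ⟨rfl, hob⟩ | ⟨rfl, hob⟩ | ⟨i', hi', s', hs', rfl, hob⟩
  · rfl
  · exact ((Set.disjoint_left.1 (setA_setB_disjoint hπ hk) (hoa ▸ hxy))
      (hob ▸ mem_orbit_self hπ k y)).elim
  · exact ((Set.disjoint_left.1 (setA_setC_disjoint hπ hk hi'.1 hi'.2 hs') (hoa ▸ hxy))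
      (hob ▸ mem_orbit_self hπ k y)).elim
  · exact ((Set.disjoint_left.1 (setA_setB_disjoint hπ hk) (hob ▸ mem_orbit_self hπ k y))
      (hoa ▸ hxy)).elim
  · rfl
  · exact ((Set.disjoint_left.1 (setB_setC_disjoint hπ hk hi'.1 hi'.2 hs') (hoa ▸ hxy))
      (hob ▸ mem_orbit_self hπ k y)).elim
  · exact ((Set.disjoint_left.1 (setA_setC_disjoint hπ hk hi.1 hi.2 hs)
      (hob ▸ mem_orbit_self hπ k y)) (hoa ▸ hxy)).elim
  · exact ((Set.disjoint_left.1 (setB_setC_disjoint hπ hk hi.1 hi.2 hs)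
      (hob ▸ mem_orbit_self hπ k y)) (hoa ▸ hxy)).elim
  · have hne : (setC ν π k i s ∩ setC ν π k i' s').Nonempty :=
      ⟨y, hoa ▸ hxy, hob ▸ mem_orbit_self hπ k y⟩
    obtain ⟨hii, hcos⟩ := setC_setC hπ hk hi.1 hi.2 hi'.1 hi'.2 hs hs' hne
    subst hii
    have hq : (Quot.mk _ (⟨s, hs⟩ : {s : E // s ≠ 0 ∧ ν.v s = 0}) :
        UnitCosets ν π (min ((k:ℤ) - i) ((k:ℤ) + i))) = Quot.mk _ ⟨s', hs'⟩ :=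
      Quot.sound hcos
    exact congrArg (fun q : UnitCosets ν π (min ((k:ℤ) - i) ((k:ℤ) + i)) =>
      (Sum.inr (Sum.inr ⟨⟨i, hi⟩, q⟩) : OrbitIndex ν π k)) hq

end Bij


theorem congrSub_orbit_classification
    (ν : DiscreteVal E) (π : E) (hπ : ν.IsUniformizer π) (k : ℕ) (hk : 1 ≤ k) :
    -- (a), (b), (c) are the orbits of `∞`, `[1:0]` and the `[1 : π^i s]`
    orbitOf (congrSub ν π k) (inftyPt E) = setA ν k ∧
    orbitOf (congrSub ν π k) (onePt (0 : E)) = setB ν π k ∧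
    (∀ i : ℤ, -(k : ℤ) < i → i < (k : ℤ) → ∀ s ∈ unitSet ν,
      orbitOf (congrSub ν π k) (onePt (π ^ i * s)) = setC ν π k i s) ∧
    -- every `Γ_k`-orbit is one of these sets
    (∀ x : Projectivization E (Fin 2 → E),
      orbitOf (congrSub ν π k) x = setA ν k ∨
      orbitOf (congrSub ν π k) x = setB ν π k ∨
      ∃ i : ℤ, -(k : ℤ) < i ∧ i < (k : ℤ) ∧ ∃ s ∈ unitSet ν,
        orbitOf (congrSub ν π k) x = setC ν π k i s) ∧
    -- the sets cover `P¹(E)`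
    (setA ν k ∪ setB ν π k ∪
      ⋃ i ∈ Set.Ioo (-(k : ℤ)) (k : ℤ), ⋃ s ∈ unitSet ν, setC ν π k i s) = Set.univ ∧
    -- pairwise disjointness
    Disjoint (setA ν k) (setB ν π k) ∧
    (∀ i : ℤ, -(k : ℤ) < i → i < (k : ℤ) → ∀ s ∈ unitSet ν,
      Disjoint (setA ν k) (setC ν π k i s) ∧ Disjoint (setB ν π k) (setC ν π k i s)) ∧
    (∀ i i' : ℤ, -(k : ℤ) < i → i < (k : ℤ) → -(k : ℤ) < i' → i' < (k : ℤ) →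
      ∀ s ∈ unitSet ν, ∀ s' ∈ unitSet ν,
        (setC ν π k i s ∩ setC ν π k i' s').Nonempty →
          i = i' ∧ s' / s - 1 ∈ ν.ball π (min ((k : ℤ) - i) ((k : ℤ) + i))) ∧
    -- the set (c) depends only on the coset of `s`
    (∀ i : ℤ, -(k : ℤ) < i → i < (k : ℤ) → ∀ s ∈ unitSet ν, ∀ s' ∈ unitSet ν,
      s' / s - 1 ∈ ν.ball π (min ((k : ℤ) - i) ((k : ℤ) + i)) →
        setC ν π k i s = setC ν π k i s') ∧
    -- consequently, the orbit space is in bijection with the index set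
    Nonempty (OrbitSpace (congrSub ν π k) ≃ OrbitIndex ν π k) := by
  refine ⟨orbit_infty hπ hk, orbit_zero hπ hk,
    fun i hi1 hi2 s hs => orbit_mid hπ hk hi1 hi2 hs,
    fun x => orbit_cases hπ hk x,
    sets_cover hπ hk,
    setA_setB_disjoint hπ hk,
    fun i hi1 hi2 s hs => ⟨setA_setC_disjoint hπ hk hi1 hi2 hs,
      setB_setC_disjoint hπ hk hi1 hi2 hs⟩,
    fun i i' hi1 hi2 hi1' hi2' s hs s' hs' hne =>
      setC_setC hπ hk hi1 hi2 hi1' hi2' hs hs' hne,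
    fun i hi1 hi2 s hs s' hs' h => setC_coset hπ hk hi1 hi2 hs hs' h,
    ⟨(Equiv.ofBijective (psi ν π hπ k hk)
      ⟨psi_injective ν π hπ k hk, psi_surjective ν π hπ k hk⟩).symm⟩⟩

end Statement3
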